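/- Let R be a graded commutative 2-ring. Then Spec R is a spectral topological space: it is T₀, quasi-compact, it has a basis of quasi-compact open subsets which is closed under finite intersections, and every irreducible closed subset has a unique generic point. Moreover, the collection {D_r : r a morphism of R} is such a basis of quasi-compact open subsets. -/

import Mathlib

open CategoryTheory CategoryTheory.Limits CategoryTheory.MonoidalCategory

universe w v u v' u' v'' u''

/-- A *graded commutative 2-ring*: an essentially small preadditive symmetric monoidal
category whose tensor product is additive in each variable and in which every object
is invertible for the tensor product. -/
class GradedComm2Ring (C : Type u) [Category.{v} C] [Preadditive C] [MonoidalCategory C]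
    [SymmetricCategory C] [MonoidalPreadditive C] : Prop where
  essentiallySmall : EssentiallySmall.{v} C
  invertible : ∀ g : C, ∃ g' : C, Nonempty (g ⊗ g' ≅ 𝟙_ C)
section IdealDef

variable (C : Type u) [Category.{v} C] [Preadditive C] [MonoidalCategory C]

/-- A *homogeneous ideal* of a graded commutative 2-ring: a family of subgroups
`I(g,h) ⊆ Hom(g,h)` closed under composition with arbitrary morphisms on either side
and under tensoring with arbitrary morphisms on either side. -/
structure HomIdeal where
  carrier : ∀ g h : C, AddSubgroup (g ⟶ h)
  comp_left : ∀ {g h h' : C} (r : g ⟶ h) (s : h ⟶ h'),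
      r ∈ carrier g h → r ≫ s ∈ carrier g h'
  comp_right : ∀ {g' g h : C} (t : g' ⟶ g) (r : g ⟶ h),
      r ∈ carrier g h → t ≫ r ∈ carrier g' h
  tensor_left : ∀ {g h g' h' : C} (s : g' ⟶ h') (r : g ⟶ h),
      r ∈ carrier g h → (s ⊗ₘ r) ∈ carrier (g' ⊗ g) (h' ⊗ h)
  tensor_right : ∀ {g h g' h' : C} (r : g ⟶ h) (s : g' ⟶ h'),
      r ∈ carrier g h → (r ⊗ₘ s) ∈ carrier (g ⊗ g') (h ⊗ h')

variable {C}

namespace HomIdeal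

instance : PartialOrder (HomIdeal C) where
  le I J := ∀ g h : C, I.carrier g h ≤ J.carrier g h
  le_refl I g h := le_rfl
  le_trans I J K h₁ h₂ g h := (h₁ g h).trans (h₂ g h)
  le_antisymm I J h₁ h₂ := by
    cases I; cases J
    congr
    funext g h
    exact le_antisymm (h₁ g h) (h₂ g h)

/-- A homogeneous ideal is *proper* if it contains no identity morphism. -/
def IsProper (I : HomIdeal C) : Prop := ∀ g : C, 𝟙 g ∉ I.carrier g g

/-- A proper homogeneous ideal is *prime* if whenever a composite belongs to it, one
of the factors belongs to it. -/
structure IsPrime (I : HomIdeal C) : Prop where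
  isProper : I.IsProper
  mem_or_mem : ∀ {g h l : C} (r : g ⟶ h) (s : h ⟶ l),
      r ≫ s ∈ I.carrier g l → r ∈ I.carrier g h ∨ s ∈ I.carrier h l

end HomIdeal

end IdealDef
section SpecDef

/-- The (homogeneous) spectrum: the set of prime homogeneous ideals. -/
def Spec (C : Type u) [Category.{v} C] [Preadditive C] [MonoidalCategory C] :=
  {p : HomIdeal C // p.IsPrime}

variable {C : Type u} [Category.{v} C] [Preadditive C] [MonoidalCategory C]

/-- The closed set `V(I) = {p : I ⊆ p}`. -/
def zeroLocus (I : HomIdeal C) : Set (Spec C) := {p | I ≤ p.1}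

/-- The basic open set `D_r = {p : r ∉ p}`. -/
def basicOpen {g h : C} (r : g ⟶ h) : Set (Spec C) := {p | r ∉ p.1.carrier g h}

/-- The Zariski topology on `Spec C`, whose closed sets are the sets `V(I)` for
homogeneous ideals `I`. -/
instance : TopologicalSpace (Spec C) :=
  TopologicalSpace.generateFrom {U : Set (Spec C) | ∃ I : HomIdeal C, U = (zeroLocus I)ᶜ}

end SpecDef

section Aux

set_option linter.unusedSectionVars false
set_option linter.unusedVariables false

variable {C : Type u} [Category.{v} C] [Preadditive C] [MonoidalCategory C]

namespace HomIdeal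

theorem conj_mem (I : HomIdeal C) {g h g' h' : C} {f : g ⟶ h} (hf : f ∈ I.carrier g h)
    (u : g' ⟶ g) (v : h ⟶ h') : u ≫ f ≫ v ∈ I.carrier g' h' :=
  I.comp_right u _ (I.comp_left f v hf)

/-- Three-fold tensor-composition interchange. -/
private theorem tensor_comp₃ {A B D E A' B' D' E' : C}
    (f₁ : A ⟶ B) (f₂ : B ⟶ D) (f₃ : D ⟶ E) (g₁ : A' ⟶ B') (g₂ : B' ⟶ D') (g₃ : D' ⟶ E') :
    (f₁ ≫ f₂ ≫ f₃) ⊗ₘ (g₁ ≫ g₂ ≫ g₃) = (f₁ ⊗ₘ g₁) ≫ (f₂ ⊗ₘ g₂) ≫ (f₃ ⊗ₘ g₃) := by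
  rw [tensorHom_comp_tensorHom, tensorHom_comp_tensorHom]

private theorem aux1 {g' h' A B D E : C} (s : g' ⟶ h') (u : A ⟶ B) (w : B ⟶ D) (v : D ⟶ E) :
    s ⊗ₘ (u ≫ w ≫ v) = (s ⊗ₘ u) ≫ (𝟙 h' ⊗ₘ w) ≫ (𝟙 h' ⊗ₘ v) := by
  rw [tensorHom_comp_tensorHom, tensorHom_comp_tensorHom]; simp

private theorem aux1' {g' h' A B D E : C} (s : g' ⟶ h') (u : A ⟶ B) (w : B ⟶ D) (v : D ⟶ E) :
    s ⊗ₘ (u ≫ w ≫ v) = (𝟙 g' ⊗ₘ u) ≫ (s ⊗ₘ w) ≫ (𝟙 h' ⊗ₘ v) := by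
  rw [tensorHom_comp_tensorHom, tensorHom_comp_tensorHom]; simp

private theorem aux3 {A B A' B' A'' B'' : C} (f : A ⟶ B) (f' : A' ⟶ B') (f'' : A'' ⟶ B'') :
    f ⊗ₘ (f' ⊗ₘ f'') = (α_ A A' A'').inv ≫ ((f ⊗ₘ f') ⊗ₘ f'') ≫ (α_ B B' B'').hom := by
  rw [associator_naturality]; simp

private theorem aux2 {P c x y : C} (r : x ⟶ y) :
    𝟙 P ⊗ₘ (𝟙 c ⊗ₘ r) = (α_ P c x).inv ≫ (𝟙 (P ⊗ c) ⊗ₘ r) ≫ (α_ P c y).hom := by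
  rw [aux3 (𝟙 P) (𝟙 c) r, id_tensorHom_id]

private theorem eq_conj {A B A' B' : C} (i : A ≅ A') (j : B ≅ B') (f : A ⟶ B) (g : A' ⟶ B')
    (hfg : f ≫ j.hom = i.hom ≫ g) : f = i.hom ≫ g ≫ j.inv := by
  rw [← Category.assoc, ← hfg]; simp

/-- Transport of memberships along an additive map, for suprema of subgroups. -/
private theorem map_iSup_aux {ι : Sort w} {A B : Type*} [AddGroup A] [AddGroup B]
    (φ : A →+ B) (S : ι → AddSubgroup A) (T : ι → AddSubgroup B)
    (hST : ∀ i, ∀ x ∈ S i, φ x ∈ T i) {x : A} (hx : x ∈ ⨆ i, S i) : φ x ∈ ⨆ i, T i := by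
  have h : (⨆ i, S i) ≤ AddSubgroup.comap φ (⨆ i, T i) :=
    iSup_le fun i => fun y hy => AddSubgroup.mem_comap.mpr
      (SetLike.le_def.mp (le_iSup T i) (hST i y hy))
  exact AddSubgroup.mem_comap.mp (h hx)

private theorem map_sup_aux {A B : Type*} [AddGroup A] [AddGroup B] (φ : A →+ B)
    {S₁ S₂ : AddSubgroup A} {T₁ T₂ : AddSubgroup B}
    (h₁ : ∀ x ∈ S₁, φ x ∈ T₁) (h₂ : ∀ x ∈ S₂, φ x ∈ T₂) {x : A} (hx : x ∈ S₁ ⊔ S₂) :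
    φ x ∈ T₁ ⊔ T₂ := by
  have h : S₁ ⊔ S₂ ≤ AddSubgroup.comap φ (T₁ ⊔ T₂) :=
    sup_le (fun y hy => AddSubgroup.mem_comap.mpr (AddSubgroup.mem_sup_left (h₁ y hy)))
      (fun y hy => AddSubgroup.mem_comap.mpr (AddSubgroup.mem_sup_right (h₂ y hy)))
  exact AddSubgroup.mem_comap.mp (h hx)

section Ops

variable [MonoidalPreadditive C]

/-- Composition on the right as an additive map. -/
private def rcompHom {g h h' : C} (s : h ⟶ h') : (g ⟶ h) →+ (g ⟶ h') :=
  AddMonoidHom.mk' (fun x => x ≫ s) (fun _ _ => Preadditive.add_comp _ _ _ _ _ _)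

private def lcompHom {g' g h : C} (t : g' ⟶ g) : (g ⟶ h) →+ (g' ⟶ h) :=
  AddMonoidHom.mk' (fun x => t ≫ x) (fun _ _ => Preadditive.comp_add _ _ _ _ _ _)

private def ltensorHom {g h g' h' : C} (s : g' ⟶ h') : (g ⟶ h) →+ (g' ⊗ g ⟶ h' ⊗ h) :=
  AddMonoidHom.mk' (fun x => s ⊗ₘ x) (fun _ _ => MonoidalPreadditive.tensor_add _ _ _)

private def rtensorHom {g h g' h' : C} (s : g' ⟶ h') : (g ⟶ h) →+ (g ⊗ g' ⟶ h ⊗ h') :=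
  AddMonoidHom.mk' (fun x => x ⊗ₘ s) (fun _ _ => MonoidalPreadditive.add_tensor _ _ _)

@[simp] private theorem rcompHom_apply {g h h' : C} (s : h ⟶ h') (x : g ⟶ h) :
    rcompHom s x = x ≫ s := rfl
@[simp] private theorem lcompHom_apply {g' g h : C} (t : g' ⟶ g) (x : g ⟶ h) :
    lcompHom t x = t ≫ x := rfl
@[simp] private theorem ltensorHom_apply {g h g' h' : C} (s : g' ⟶ h') (x : g ⟶ h) :
    ltensorHom s x = s ⊗ₘ x := rfl
@[simp] private theorem rtensorHom_apply {g h g' h' : C} (s : g' ⟶ h') (x : g ⟶ h) :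
    rtensorHom s x = x ⊗ₘ s := rfl

/-- The supremum of a family of homogeneous ideals. -/
def fsup {ι : Sort w} (f : ι → HomIdeal C) : HomIdeal C where
  carrier g h := ⨆ i, (f i).carrier g h
  comp_left r s hr := map_iSup_aux (rcompHom s) _ _ (fun i x hx => (f i).comp_left x s hx) hr
  comp_right t r hr := map_iSup_aux (lcompHom t) _ _ (fun i x hx => (f i).comp_right t x hx) hr
  tensor_left s r hr := map_iSup_aux (ltensorHom s) _ _ (fun i x hx => (f i).tensor_left s x hx) hr
  tensor_right r s hr := map_iSup_aux (rtensorHom s) _ _ (fun i x hx => (f i).tensor_right x s hx) hr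

theorem le_fsup {ι : Sort w} (f : ι → HomIdeal C) (i : ι) : f i ≤ fsup f :=
  fun g h => le_iSup (fun j => (f j).carrier g h) i

theorem fsup_le {ι : Sort w} {f : ι → HomIdeal C} {J : HomIdeal C} (H : ∀ i, f i ≤ J) :
    fsup f ≤ J := fun g h => iSup_le fun i => H i g h

/-- Binary supremum of homogeneous ideals. -/
def hsup (I J : HomIdeal C) : HomIdeal C where
  carrier g h := I.carrier g h ⊔ J.carrier g h
  comp_left r s hr := map_sup_aux (rcompHom s)
    (fun x hx => I.comp_left x s hx) (fun x hx => J.comp_left x s hx) hr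
  comp_right t r hr := map_sup_aux (lcompHom t)
    (fun x hx => I.comp_right t x hx) (fun x hx => J.comp_right t x hx) hr
  tensor_left s r hr := map_sup_aux (ltensorHom s)
    (fun x hx => I.tensor_left s x hx) (fun x hx => J.tensor_left s x hx) hr
  tensor_right r s hr := map_sup_aux (rtensorHom s)
    (fun x hx => I.tensor_right x s hx) (fun x hx => J.tensor_right x s hx) hr

theorem le_hsup_left (I J : HomIdeal C) : I ≤ hsup I J := fun g h => le_sup_left
theorem le_hsup_right (I J : HomIdeal C) : J ≤ hsup I J := fun g h => le_sup_right

end Ops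

/-- Intersection of two homogeneous ideals. -/
def hinf (I J : HomIdeal C) : HomIdeal C where
  carrier g h := I.carrier g h ⊓ J.carrier g h
  comp_left r s hr := ⟨I.comp_left r s hr.1, J.comp_left r s hr.2⟩
  comp_right t r hr := ⟨I.comp_right t r hr.1, J.comp_right t r hr.2⟩
  tensor_left s r hr := ⟨I.tensor_left s r hr.1, J.tensor_left s r hr.2⟩
  tensor_right r s hr := ⟨I.tensor_right r s hr.1, J.tensor_right r s hr.2⟩

/-- The improper ideal. -/
def htop : HomIdeal C where
  carrier _ _ := ⊤
  comp_left _ _ _ := trivial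
  comp_right _ _ _ := trivial
  tensor_left _ _ _ := trivial
  tensor_right _ _ _ := trivial

theorem exists_of_not_le {I J : HomIdeal C} (h : ¬ I ≤ J) :
    ∃ (g h' : C) (r : g ⟶ h'), r ∈ I.carrier g h' ∧ r ∉ J.carrier g h' := by
  by_contra hc
  push_neg at hc
  exact h fun g h' => fun r hr => hc g h' r hr

section Invertible

variable [SymmetricCategory C] [MonoidalPreadditive C] [GradedComm2Ring C]

theorem mem_of_tensor_id {I : HomIdeal C} {g h x : C} {r : g ⟶ h}
    (hm : r ⊗ₘ 𝟙 x ∈ I.carrier (g ⊗ x) (h ⊗ x)) : r ∈ I.carrier g h := by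
  obtain ⟨x', ⟨e⟩⟩ := GradedComm2Ring.invertible (C := C) x
  have h1 : (r ⊗ₘ 𝟙 x) ⊗ₘ 𝟙 x' ∈ I.carrier _ _ := I.tensor_right _ (𝟙 x') hm
  have h2 : r ⊗ₘ 𝟙 (x ⊗ x') ∈ I.carrier (g ⊗ (x ⊗ x')) (h ⊗ (x ⊗ x')) := by
    have heq : r ⊗ₘ 𝟙 (x ⊗ x')
        = (α_ g x x').inv ≫ ((r ⊗ₘ 𝟙 x) ⊗ₘ 𝟙 x') ≫ (α_ h x x').hom := by
      rw [← id_tensorHom_id, aux3]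
    rw [heq]; exact conj_mem I h1 _ _
  have h3 : r ⊗ₘ 𝟙 (𝟙_ C) ∈ I.carrier (g ⊗ 𝟙_ C) (h ⊗ 𝟙_ C) := by
    have heq : r ⊗ₘ 𝟙 (𝟙_ C)
        = (𝟙 g ⊗ₘ e.inv) ≫ (r ⊗ₘ 𝟙 (x ⊗ x')) ≫ (𝟙 h ⊗ₘ e.hom) := by
      rw [tensorHom_comp_tensorHom, tensorHom_comp_tensorHom]; simp
    rw [heq]; exact conj_mem I h2 _ _
  have heq : r = (ρ_ g).inv ≫ (r ⊗ₘ 𝟙 (𝟙_ C)) ≫ (ρ_ h).hom := by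
    rw [tensorHom_id, rightUnitor_naturality]; simp
  rw [heq]; exact conj_mem I h3 _ _

theorem mem_of_id_tensor {I : HomIdeal C} {g h x : C} {r : g ⟶ h}
    (hm : 𝟙 x ⊗ₘ r ∈ I.carrier (x ⊗ g) (x ⊗ h)) : r ∈ I.carrier g h := by
  apply mem_of_tensor_id (x := x)
  have heq : r ⊗ₘ 𝟙 x = (β_ g x).hom ≫ (𝟙 x ⊗ₘ r) ≫ (β_ h x).inv :=
    eq_conj _ _ _ _ (BraidedCategory.braiding_naturality r (𝟙 x))
  rw [heq]; exact conj_mem I hm _ _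

theorem mem_of_id_mem (I : HomIdeal C) {x : C} (hx : 𝟙 x ∈ I.carrier x x)
    {g h : C} (f : g ⟶ h) : f ∈ I.carrier g h :=
  mem_of_tensor_id (I.tensor_left f (𝟙 x) hx)

theorem IsPrime.tensor_mem_or {p : HomIdeal C} (hp : p.IsPrime) {g h g' h' : C}
    {r : g ⟶ h} {s : g' ⟶ h'} (hrs : r ⊗ₘ s ∈ p.carrier (g ⊗ g') (h ⊗ h')) :
    r ∈ p.carrier g h ∨ s ∈ p.carrier g' h' := by
  have heq : (r ⊗ₘ 𝟙 g') ≫ (𝟙 h ⊗ₘ s) = r ⊗ₘ s := by rw [tensorHom_comp_tensorHom]; simp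
  rcases hp.mem_or_mem _ _ (by rw [heq]; exact hrs) with h1 | h2
  · exact Or.inl (mem_of_tensor_id h1)
  · exact Or.inr (mem_of_id_tensor h2)

/-- Tensoring on the right with an object is full: every morphism `A ⊗ y ⟶ B ⊗ y`
is of the form `θ ⊗ 𝟙 y`. -/
theorem exists_tensor_id_eq (y : C) {A B : C} (f : A ⊗ y ⟶ B ⊗ y) :
    ∃ θ : A ⟶ B, θ ⊗ₘ 𝟙 y = f := by
  obtain ⟨y', ⟨e⟩⟩ := GradedComm2Ring.invertible (C := C) y
  have e' : y' ⊗ y ≅ 𝟙_ C := (β_ y' y) ≪≫ e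
  let κ : ∀ X : C, (X ⊗ y) ⊗ y' ≅ X := fun X =>
    α_ X y y' ≪≫ whiskerLeftIso X e ≪≫ ρ_ X
  let κ' : ∀ X : C, (X ⊗ y') ⊗ y ≅ X := fun X =>
    α_ X y' y ≪≫ whiskerLeftIso X e' ≪≫ ρ_ X
  have κnat : ∀ {X X' : C} (u : X ⟶ X'),
      ((u ⊗ₘ 𝟙 y) ⊗ₘ 𝟙 y') ≫ (κ X').hom = (κ X).hom ≫ u := by
    intro X X' u
    simp only [κ]
    simp only [Iso.trans_hom, whiskerLeftIso_hom, ← Category.assoc]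
    rw [associator_naturality]
    simp only [Category.assoc, id_tensorHom_id]
    simp only [tensorHom_id]
    rw [← whisker_exchange_assoc]
    simp
  have κ'nat : ∀ {X X' : C} (u : X ⟶ X'),
      ((u ⊗ₘ 𝟙 y') ⊗ₘ 𝟙 y) ≫ (κ' X').hom = (κ' X).hom ≫ u := by
    intro X X' u
    simp only [κ']
    simp only [Iso.trans_hom, whiskerLeftIso_hom, ← Category.assoc]
    rw [associator_naturality]
    simp only [Category.assoc, id_tensorHom_id]
    simp only [tensorHom_id]
    rw [← whisker_exchange_assoc]
    simp
  have inj : ∀ {P Q : C} (u v : P ⟶ Q), u ⊗ₘ 𝟙 y' = v ⊗ₘ 𝟙 y' → u = v := by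
    intro P Q u v huv
    have hu : u = (κ' P).inv ≫ ((u ⊗ₘ 𝟙 y') ⊗ₘ 𝟙 y) ≫ (κ' Q).hom := by
      rw [κ'nat u]; simp
    have hv : v = (κ' P).inv ≫ ((v ⊗ₘ 𝟙 y') ⊗ₘ 𝟙 y) ≫ (κ' Q).hom := by
      rw [κ'nat v]; simp
    rw [hu, hv, huv]
  refine ⟨(κ A).inv ≫ (f ⊗ₘ 𝟙 y') ≫ (κ B).hom, inj _ _ ?_⟩
  have h1 := κnat ((κ A).inv ≫ (f ⊗ₘ 𝟙 y') ≫ (κ B).hom)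
  calc (((κ A).inv ≫ (f ⊗ₘ 𝟙 y') ≫ (κ B).hom) ⊗ₘ 𝟙 y) ⊗ₘ 𝟙 y'
      = ((((κ A).inv ≫ (f ⊗ₘ 𝟙 y') ≫ (κ B).hom) ⊗ₘ 𝟙 y) ⊗ₘ 𝟙 y') ≫ (κ B).hom ≫ (κ B).inv := by
        simp
    _ = (κ A).hom ≫ ((κ A).inv ≫ (f ⊗ₘ 𝟙 y') ≫ (κ B).hom) ≫ (κ B).inv := by
        rw [← Category.assoc, h1, Category.assoc]
    _ = f ⊗ₘ 𝟙 y' := by simp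

end Invertible

section Span

variable [SymmetricCategory C] [MonoidalPreadditive C]

/-- Generators for the principal ideal on `r`. -/
def spanSet {x y : C} (r : x ⟶ y) (g h : C) : Set (g ⟶ h) :=
  {m | ∃ (c : C) (u : g ⟶ c ⊗ x) (v : c ⊗ y ⟶ h), m = u ≫ (𝟙 c ⊗ₘ r) ≫ v}

/-- The principal homogeneous ideal generated by a morphism `r`. -/
def span {x y : C} (r : x ⟶ y) : HomIdeal C where
  carrier g h := AddSubgroup.closure (spanSet r g h)
  comp_left := by
    intro g h h' m s hm
    refine AddSubgroup.mem_comap.mp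
      (((AddSubgroup.closure_le _).mpr ?_ :
        _ ≤ AddSubgroup.comap (rcompHom s) (AddSubgroup.closure (spanSet r g h'))) hm)
    rintro m ⟨c, u, v, rfl⟩
    exact AddSubgroup.subset_closure ⟨c, u, v ≫ s, by simp⟩
  comp_right := by
    intro g' g h t m hm
    refine AddSubgroup.mem_comap.mp
      (((AddSubgroup.closure_le _).mpr ?_ :
        _ ≤ AddSubgroup.comap (lcompHom t) (AddSubgroup.closure (spanSet r g' h))) hm)
    rintro m ⟨c, u, v, rfl⟩
    exact AddSubgroup.subset_closure ⟨c, t ≫ u, v, by simp⟩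
  tensor_left := by
    intro g h g' h' s m hm
    refine AddSubgroup.mem_comap.mp
      (((AddSubgroup.closure_le _).mpr ?_ :
        _ ≤ AddSubgroup.comap (ltensorHom s) (AddSubgroup.closure (spanSet r (g' ⊗ g) (h' ⊗ h)))) hm)
    rintro m ⟨c, u, v, rfl⟩
    refine AddSubgroup.subset_closure
      ⟨h' ⊗ c, (s ⊗ₘ u) ≫ (α_ h' c x).inv, (α_ h' c y).hom ≫ (𝟙 h' ⊗ₘ v), ?_⟩
    simp only [ltensorHom_apply]
    rw [aux1 s u _ v, aux2]
    simp [Category.assoc]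
  tensor_right := by
    intro g h g' h' m s hm
    refine AddSubgroup.mem_comap.mp
      (((AddSubgroup.closure_le _).mpr ?_ :
        _ ≤ AddSubgroup.comap (rtensorHom s) (AddSubgroup.closure (spanSet r (g ⊗ g') (h ⊗ h')))) hm)
    rintro m ⟨c, u, v, rfl⟩
    refine AddSubgroup.subset_closure
      ⟨h' ⊗ c, (β_ g g').hom ≫ (s ⊗ₘ u) ≫ (α_ h' c x).inv,
        (α_ h' c y).hom ≫ (𝟙 h' ⊗ₘ v) ≫ (β_ h h').inv, ?_⟩
    have hms : (u ≫ (𝟙 c ⊗ₘ r) ≫ v) ⊗ₘ s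
        = (β_ g g').hom ≫ (s ⊗ₘ (u ≫ (𝟙 c ⊗ₘ r) ≫ v)) ≫ (β_ h h').inv :=
      eq_conj _ _ _ _ (BraidedCategory.braiding_naturality (u ≫ (𝟙 c ⊗ₘ r) ≫ v) s)
    simp only [rtensorHom_apply]
    rw [hms, aux1 s u _ v, aux2]
    simp [Category.assoc]

theorem mem_span_self {x y : C} (r : x ⟶ y) : r ∈ (span r).carrier x y :=
  AddSubgroup.subset_closure ⟨𝟙_ C, (λ_ x).inv, (λ_ y).hom, by simp⟩

theorem span_le_of_mem {x y : C} {r : x ⟶ y} {I : HomIdeal C} (hr : r ∈ I.carrier x y) :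
    span r ≤ I := by
  intro g h
  refine (AddSubgroup.closure_le _).mpr ?_
  rintro m ⟨c, u, v, rfl⟩
  exact conj_mem I (I.tensor_left (𝟙 c) r hr) u v

theorem mem_of_span_le {x y : C} {r : x ⟶ y} {I : HomIdeal C} (H : span r ≤ I) :
    r ∈ I.carrier x y := H x y (mem_span_self r)

end Span

section SpanTensor

variable [SymmetricCategory C] [MonoidalPreadditive C] [GradedComm2Ring C]

theorem tensor_mem_span_comp {x y z : C} (a : x ⟶ y) (b : y ⟶ z) :
    a ⊗ₘ b ∈ (span (a ≫ b)).carrier (x ⊗ y) (y ⊗ z) := by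
  obtain ⟨θ, hθ⟩ := exists_tensor_id_eq y (β_ y y).inv
  refine AddSubgroup.subset_closure ⟨y, (β_ x y).hom ≫ (θ ⊗ₘ 𝟙 x), 𝟙 _, ?_⟩
  have h1 : a ⊗ₘ 𝟙 y = (β_ x y).hom ≫ (𝟙 y ⊗ₘ a) ≫ (β_ y y).inv :=
    eq_conj _ _ _ _ (BraidedCategory.braiding_naturality a (𝟙 y))
  have h2 : a ⊗ₘ b = (a ⊗ₘ 𝟙 y) ≫ (𝟙 y ⊗ₘ b) := by rw [tensorHom_comp_tensorHom]; simp
  have key : (𝟙 y ⊗ₘ a) ≫ (θ ⊗ₘ 𝟙 y) ≫ (𝟙 y ⊗ₘ b) = θ ⊗ₘ (a ≫ b) := by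
    rw [← tensor_comp₃]; simp
  have h5 : θ ⊗ₘ (a ≫ b) = (θ ⊗ₘ 𝟙 x) ≫ (𝟙 y ⊗ₘ (a ≫ b)) := by rw [tensorHom_comp_tensorHom]; simp
  calc a ⊗ₘ b = (a ⊗ₘ 𝟙 y) ≫ (𝟙 y ⊗ₘ b) := h2
    _ = (β_ x y).hom ≫ (𝟙 y ⊗ₘ a) ≫ (θ ⊗ₘ 𝟙 y) ≫ (𝟙 y ⊗ₘ b) := by
        rw [h1, ← hθ]; simp only [Category.assoc]
    _ = (β_ x y).hom ≫ (θ ⊗ₘ (a ≫ b)) := by rw [key]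
    _ = ((β_ x y).hom ≫ (θ ⊗ₘ 𝟙 x)) ≫ (𝟙 y ⊗ₘ (a ≫ b)) ≫ 𝟙 _ := by
        rw [h5]; simp [Category.assoc]

theorem core_tensor_mem {x y z : C} (a : x ⟶ y) (b : y ⟶ z) (c c' : C) :
    (𝟙 c ⊗ₘ a) ⊗ₘ (𝟙 c' ⊗ₘ b)
      ∈ (span (a ≫ b)).carrier ((c ⊗ x) ⊗ (c' ⊗ y)) ((c ⊗ y) ⊗ (c' ⊗ z)) := by
  have h2 : 𝟙 (c ⊗ c') ⊗ₘ (a ⊗ₘ b) ∈ (span (a ≫ b)).carrier _ _ :=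
    (span (a ≫ b)).tensor_left (𝟙 (c ⊗ c')) (a ⊗ₘ b) (tensor_mem_span_comp a b)
  have nat := tensorμ_natural (𝟙 c) a (𝟙 c') b
  have eq : (𝟙 c ⊗ₘ a) ⊗ₘ (𝟙 c' ⊗ₘ b)
      = tensorμ c x c' y ≫ (𝟙 (c ⊗ c') ⊗ₘ (a ⊗ₘ b)) ≫ tensorδ c y c' z := by
    have h := congrArg (fun m => m ≫ tensorδ c y c' z) nat
    simp only [Category.assoc, tensorμ_tensorδ, Category.comp_id, id_tensorHom_id] at h
    exact h
  rw [eq]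
  exact conj_mem _ h2 _ _

theorem span_tensor_span {x y z : C} (a : x ⟶ y) (b : y ⟶ z) {g h g' h' : C}
    {m : g ⟶ h} {m' : g' ⟶ h'} (hm : m ∈ (span a).carrier g h)
    (hm' : m' ∈ (span b).carrier g' h') :
    m ⊗ₘ m' ∈ (span (a ≫ b)).carrier (g ⊗ g') (h ⊗ h') := by
  have step1 : ∀ mg ∈ spanSet a g h,
      mg ⊗ₘ m' ∈ (span (a ≫ b)).carrier (g ⊗ g') (h ⊗ h') := by
    rintro mg ⟨c, u, v, rfl⟩
    refine AddSubgroup.mem_comap.mp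
      (((AddSubgroup.closure_le _).mpr ?_ :
        _ ≤ AddSubgroup.comap (ltensorHom (u ≫ (𝟙 c ⊗ₘ a) ≫ v))
          ((span (a ≫ b)).carrier _ _)) hm')
    rintro m' ⟨c', u', v', rfl⟩
    refine AddSubgroup.mem_comap.mpr ?_
    simp only [ltensorHom_apply]
    rw [tensor_comp₃]
    exact conj_mem _ (core_tensor_mem a b c c') _ _
  refine AddSubgroup.mem_comap.mp
    (((AddSubgroup.closure_le _).mpr ?_ :
      _ ≤ AddSubgroup.comap (rtensorHom m') ((span (a ≫ b)).carrier _ _)) hm)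
  intro mg hmg
  exact AddSubgroup.mem_comap.mpr (step1 mg hmg)

end SpanTensor

section Pow

variable [SymmetricCategory C] [MonoidalPreadditive C] [GradedComm2Ring C]

/-- Tensor powers of an object. -/
def obPow (x : C) : ℕ → C
  | 0 => 𝟙_ C
  | n + 1 => x ⊗ obPow x n

/-- Tensor powers of a morphism. -/
def powHom {g h : C} (r : g ⟶ h) : ∀ n : ℕ, (obPow g n ⟶ obPow h n)
  | 0 => 𝟙 (𝟙_ C)
  | n + 1 => r ⊗ₘ powHom r n

theorem mem_of_powHom_mem {p : HomIdeal C} (hp : p.IsPrime) {g h : C} {r : g ⟶ h}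
    {n : ℕ} (hn : powHom r n ∈ p.carrier (obPow g n) (obPow h n)) :
    r ∈ p.carrier g h := by
  induction n with
  | zero => exact absurd hn (hp.isProper _)
  | succ n ih =>
      rcases hp.tensor_mem_or (show r ⊗ₘ powHom r n ∈ _ from hn) with h1 | h2
      · exact h1
      · exact ih h2

theorem pow_add_eq {g h : C} (r : g ⟶ h) (m n k : ℕ) (hk : m + n = k) :
    ∃ (u : obPow g k ⟶ obPow g m ⊗ obPow g n) (v : obPow h m ⊗ obPow h n ⟶ obPow h k),
      powHom r k = u ≫ (powHom r m ⊗ₘ powHom r n) ≫ v := by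
  induction m generalizing k with
  | zero =>
      have hnk : n = k := by omega
      subst hnk
      exact ⟨(λ_ _).inv, (λ_ _).hom, by simp [powHom, obPow]⟩
  | succ m ih =>
      have hnk : (m + n) + 1 = k := by omega
      subst hnk
      obtain ⟨u, v, huv⟩ := ih (m + n) rfl
      refine ⟨(𝟙 g ⊗ₘ u) ≫ (α_ g (obPow g m) (obPow g n)).inv,
        (α_ h (obPow h m) (obPow h n)).hom ≫ (𝟙 h ⊗ₘ v), ?_⟩
      show r ⊗ₘ powHom r (m + n) = _
      rw [huv, aux1' r u _ v, aux3]
      simp only [Category.assoc]; exact (Category.assoc _ _ _).symm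

end Pow

section Radical

variable [SymmetricCategory C] [MonoidalPreadditive C] [GradedComm2Ring C]

theorem exists_pow_mem (J : HomIdeal C) {g h : C} (r : g ⟶ h)
    (H : ∀ p : Spec C, J ≤ p.1 → r ∈ p.1.carrier g h) :
    ∃ n : ℕ, powHom r (n + 1) ∈ J.carrier (obPow g (n + 1)) (obPow h (n + 1)) := by
  by_contra hc
  push_neg at hc
  set Ω : Set (HomIdeal C) := {I : HomIdeal C | J ≤ I ∧
      ∀ n : ℕ, powHom r (n + 1) ∉ I.carrier (obPow g (n + 1)) (obPow h (n + 1))} with hΩdef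
  have hJΩ : J ∈ Ω := ⟨le_refl J, hc⟩
  have hub : ∀ c ⊆ Ω, IsChain (· ≤ ·) c → ∃ ub ∈ Ω, ∀ z ∈ c, z ≤ ub := by
    intro c hcΩ hchain
    rcases Set.eq_empty_or_nonempty c with rfl | ⟨I₀, hI₀⟩
    · exact ⟨J, hJΩ, fun z hz => absurd hz (Set.notMem_empty z)⟩
    · haveI : Nonempty c := ⟨⟨I₀, hI₀⟩⟩
      refine ⟨fsup (fun i : c => i.1), ⟨?_, ?_⟩, fun z hz => le_fsup (fun i : c => i.1) ⟨z, hz⟩⟩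
      · exact le_trans (hcΩ hI₀).1 (le_fsup (fun i : c => i.1) ⟨I₀, hI₀⟩)
      · intro n hn
        have hdir : Directed (· ≤ ·)
            (fun i : c => i.1.carrier (obPow g (n + 1)) (obPow h (n + 1))) := by
          intro i j
          rcases eq_or_ne i j with rfl | hij
          · exact ⟨i, le_rfl, le_rfl⟩
          · rcases hchain i.2 j.2 (fun hh => hij (Subtype.ext hh)) with hle | hle
            · exact ⟨j, hle _ _, le_rfl⟩
            · exact ⟨i, le_rfl, hle _ _⟩
        obtain ⟨⟨I, hIc⟩, hmem⟩ := (AddSubgroup.mem_iSup_of_directed hdir).mp hn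
        exact (hcΩ hIc).2 n hmem
  obtain ⟨M, hM⟩ := zorn_le₀ Ω hub
  have hMΩ := hM.1
  have hMmax := hM.2
  have hproper : M.IsProper := by
    intro x hx
    exact hMΩ.2 0 (mem_of_id_mem M hx _)
  have hprime : M.IsPrime := by
    refine ⟨hproper, ?_⟩
    intro g1 g2 g3 a b hab
    by_contra hcon
    push_neg at hcon
    obtain ⟨ha, hb⟩ := hcon
    have haux : ∀ {x' y' : C} (w : x' ⟶ y'), w ∉ M.carrier x' y' →
        ∃ m : ℕ, powHom r (m + 1) ∈
          (hsup M (span w)).carrier (obPow g (m + 1)) (obPow h (m + 1)) := by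
      intro x' y' w hw
      by_contra hno
      push_neg at hno
      have hmem : hsup M (span w) ∈ Ω :=
        ⟨le_trans hMΩ.1 (le_hsup_left M (span w)), hno⟩
      have hle := hMmax hmem (le_hsup_left M (span w))
      exact hw (SetLike.le_def.mp (hle x' y')
        (SetLike.le_def.mp (le_hsup_right M (span w) x' y') (mem_span_self w)))
    obtain ⟨m, hm⟩ := haux a ha
    obtain ⟨n, hn⟩ := haux b hb
    obtain ⟨u, v, huv⟩ := pow_add_eq r (m + 1) (n + 1) ((m + n + 1) + 1) (by omega)
    apply hMΩ.2 (m + n + 1)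
    rw [huv]
    refine conj_mem M ?_ u v
    obtain ⟨xm, hxm, ym, hym, hmeq⟩ := AddSubgroup.mem_sup.mp hm
    obtain ⟨xn, hxn, yn, hyn, hneq⟩ := AddSubgroup.mem_sup.mp hn
    rw [← hmeq, ← hneq, MonoidalPreadditive.add_tensor,
      MonoidalPreadditive.tensor_add, MonoidalPreadditive.tensor_add]
    refine AddSubgroup.add_mem _ (AddSubgroup.add_mem _ ?_ ?_) (AddSubgroup.add_mem _ ?_ ?_)
    · exact M.tensor_right xm xn hxm
    · exact M.tensor_right xm yn hxm
    · exact M.tensor_left ym xn hxn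
    · exact span_le_of_mem hab _ _ (span_tensor_span a b hym hyn)
  exact hMΩ.2 0 (M.tensor_right r (𝟙 (𝟙_ C)) (H ⟨M, hprime⟩ hMΩ.1))

end Radical

end HomIdeal

section Topology

open HomIdeal

variable [SymmetricCategory C] [MonoidalPreadditive C] [GradedComm2Ring C]

theorem spec_isOpen_iff (U : Set (Spec C)) :
    IsOpen U ↔ ∃ I : HomIdeal C, U = (zeroLocus I)ᶜ := by
  constructor
  · intro hU
    have hU' : TopologicalSpace.GenerateOpen
        {U : Set (Spec C) | ∃ I : HomIdeal C, U = (zeroLocus I)ᶜ} U := hU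
    clear hU
    induction hU' with
    | basic V hV => exact hV
    | univ =>
        refine ⟨htop, ?_⟩
        ext p
        simp only [Set.mem_univ, Set.mem_compl_iff, zeroLocus, Set.mem_setOf_eq, true_iff]
        intro hle
        exact p.2.isProper (𝟙_ C) (SetLike.le_def.mp (hle (𝟙_ C) (𝟙_ C)) (AddSubgroup.mem_top _))
    | inter U V hU hV ihU ihV =>
        obtain ⟨I, rfl⟩ := ihU
        obtain ⟨I', rfl⟩ := ihV
        refine ⟨hinf I I', ?_⟩
        rw [← Set.compl_union]
        have : zeroLocus I ∪ zeroLocus I' = zeroLocus (hinf I I') := by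
          ext p
          constructor
          · rintro (hp | hp)
            · exact fun g h => le_trans inf_le_left (hp g h)
            · exact fun g h => le_trans inf_le_right (hp g h)
          · intro hp
            by_contra hcon
            obtain ⟨g1, h1', r1, hr1, hr1p⟩ := exists_of_not_le (fun hle => hcon (Or.inl hle))
            obtain ⟨g2, h2', r2, hr2, hr2p⟩ := exists_of_not_le (fun hle => hcon (Or.inr hle))
            have hmem : r1 ⊗ₘ r2 ∈ (hinf I I').carrier (g1 ⊗ g2) (h1' ⊗ h2') :=
              ⟨I.tensor_right r1 r2 hr1, I'.tensor_left r1 r2 hr2⟩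
            rcases p.2.tensor_mem_or (SetLike.le_def.mp (hp _ _) hmem) with hcc | hcc
            · exact hr1p hcc
            · exact hr2p hcc
        rw [this]
    | sUnion S hS ih =>
        choose I hI using ih
        refine ⟨fsup (fun V : S => I V.1 V.2), ?_⟩
        ext p
        simp only [Set.mem_sUnion, Set.mem_compl_iff]
        constructor
        · rintro ⟨V, hV, hpV⟩ hle
          rw [hI V hV] at hpV
          exact hpV (fun g h => le_trans (le_fsup (fun V : S => I V.1 V.2) ⟨V, hV⟩ g h) (hle g h))
        · intro hp
          by_contra hcon
          apply hp
          intro g h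
          refine iSup_le ?_
          rintro ⟨V, hV⟩
          have hnV : p ∉ V := fun hmem => hcon ⟨V, hV, hmem⟩
          rw [hI V hV] at hnV
          exact (Set.notMem_compl_iff.mp hnV) g h
  · rintro ⟨I, rfl⟩
    exact TopologicalSpace.GenerateOpen.basic _ ⟨I, rfl⟩

theorem spec_isClosed_iff (Z : Set (Spec C)) :
    IsClosed Z ↔ ∃ I : HomIdeal C, Z = zeroLocus I := by
  rw [← isOpen_compl_iff, spec_isOpen_iff]
  constructor
  · rintro ⟨I, hI⟩
    exact ⟨I, by rw [← compl_compl Z, hI, compl_compl]⟩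
  · rintro ⟨I, rfl⟩
    exact ⟨I, rfl⟩

theorem spec_isClosed_zeroLocus (I : HomIdeal C) : IsClosed (zeroLocus I) :=
  (spec_isClosed_iff _).mpr ⟨I, rfl⟩

theorem spec_closure_singleton (p : Spec C) :
    closure ({p} : Set (Spec C)) = zeroLocus p.1 := by
  apply subset_antisymm
  · exact closure_minimal (Set.singleton_subset_iff.mpr (le_refl p.1))
      (spec_isClosed_zeroLocus _)
  · obtain ⟨I, hI⟩ := (spec_isClosed_iff (closure {p})).mp isClosed_closure
    have hpI : I ≤ p.1 := by
      have hmem : p ∈ closure ({p} : Set (Spec C)) := subset_closure rfl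
      rw [hI] at hmem
      exact hmem
    intro q hq
    rw [hI]
    exact fun g h => le_trans (hpI g h) (hq g h)

theorem spec_t0 : T0Space (Spec C) := by
  rw [t0Space_iff_inseparable]
  intro p q hpq
  have h := inseparable_iff_closure_eq.mp hpq
  rw [spec_closure_singleton, spec_closure_singleton] at h
  have h1 : p.1 ≤ q.1 := by
    have hmem : q ∈ zeroLocus q.1 := fun g h => le_rfl
    rw [← h] at hmem
    exact hmem
  have h2 : q.1 ≤ p.1 := by
    have hmem : p ∈ zeroLocus p.1 := fun g h => le_rfl
    rw [h] at hmem
    exact hmem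
  exact Subtype.ext (le_antisymm h1 h2)

theorem spec_basicOpen_eq {g h : C} (r : g ⟶ h) :
    basicOpen r = (zeroLocus (span r))ᶜ := by
  ext p
  simp only [basicOpen, Set.mem_setOf_eq, Set.mem_compl_iff]
  constructor
  · exact fun hr hle => hr (mem_of_span_le hle)
  · exact fun hno hr => hno (span_le_of_mem hr)

theorem spec_isOpen_basicOpen {g h : C} (r : g ⟶ h) : IsOpen (basicOpen r) := by
  rw [spec_basicOpen_eq]
  exact TopologicalSpace.GenerateOpen.basic _ ⟨span r, rfl⟩

theorem spec_basicOpen_id : (basicOpen (𝟙 (𝟙_ C)) : Set (Spec C)) = Set.univ := by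
  ext p
  simp only [basicOpen, Set.mem_setOf_eq, Set.mem_univ, iff_true]
  exact p.2.isProper (𝟙_ C)

theorem spec_basicOpen_inter {g h g' h' : C} (r : g ⟶ h) (s : g' ⟶ h') :
    basicOpen r ∩ basicOpen s = basicOpen (r ⊗ₘ s) := by
  ext p
  simp only [Set.mem_inter_iff, basicOpen, Set.mem_setOf_eq]
  constructor
  · rintro ⟨hr, hs⟩ hrs
    rcases p.2.tensor_mem_or hrs with hcc | hcc
    · exact hr hcc
    · exact hs hcc
  · intro hrs
    exact ⟨fun hr => hrs (p.1.tensor_right r s hr), fun hs => hrs (p.1.tensor_left r s hs)⟩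

theorem spec_basis : TopologicalSpace.IsTopologicalBasis
    {U : Set (Spec C) | ∃ (g h : C) (r : g ⟶ h), U = basicOpen r} := by
  refine TopologicalSpace.isTopologicalBasis_of_isOpen_of_nhds ?_ ?_
  · rintro U ⟨g, h, r, rfl⟩
    exact spec_isOpen_basicOpen r
  · intro p U hpU hU
    obtain ⟨I, rfl⟩ := (spec_isOpen_iff U).mp hU
    obtain ⟨g, h, r, hrI, hrp⟩ := exists_of_not_le hpU
    exact ⟨basicOpen r, ⟨g, h, r, rfl⟩, hrp,
      fun q hq hleq => hq (SetLike.le_def.mp (hleq g h) hrI)⟩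

theorem spec_isCompact_basicOpen {g h : C} (r : g ⟶ h) : IsCompact (basicOpen r) := by
  classical
  rw [isCompact_iff_finite_subcover]
  intro ι U hUopen hcover
  have hex : ∀ i, ∃ I : HomIdeal C, U i = (zeroLocus I)ᶜ :=
    fun i => (spec_isOpen_iff _).mp (hUopen i)
  choose I hI using hex
  have H : ∀ p : Spec C, fsup I ≤ p.1 → r ∈ p.1.carrier g h := by
    intro p hle
    by_contra hr
    obtain ⟨i, hpi⟩ := Set.mem_iUnion.mp (hcover hr)
    rw [hI i] at hpi
    exact hpi (fun g' h' => le_trans (le_fsup I i g' h') (hle g' h'))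
  obtain ⟨n, hn⟩ := exists_pow_mem (fsup I) r H
  have key : ∃ F : Finset ι, powHom r (n + 1) ∈
      ⨆ i ∈ F, (I i).carrier (obPow g (n + 1)) (obPow h (n + 1)) := by
    have hdir : Directed (· ≤ ·)
        (fun F : Finset ι => ⨆ i ∈ F, (I i).carrier (obPow g (n + 1)) (obPow h (n + 1))) := by
      intro F G
      exact ⟨F ∪ G, biSup_mono (fun i hi => Finset.mem_union_left G hi),
        biSup_mono (fun i hi => Finset.mem_union_right F hi)⟩
    have heq : (⨆ i, (I i).carrier (obPow g (n + 1)) (obPow h (n + 1)))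
        = ⨆ F : Finset ι, ⨆ i ∈ F, (I i).carrier (obPow g (n + 1)) (obPow h (n + 1)) := by
      apply le_antisymm
      · refine iSup_le fun i => ?_
        have hsing : (I i).carrier (obPow g (n + 1)) (obPow h (n + 1))
            = ⨆ j ∈ ({i} : Finset ι), (I j).carrier (obPow g (n + 1)) (obPow h (n + 1)) := by
          simp
        rw [hsing]
        exact le_iSup (fun F : Finset ι => ⨆ j ∈ F,
          (I j).carrier (obPow g (n + 1)) (obPow h (n + 1))) ({i} : Finset ι)
      · exact iSup_le fun F => iSup₂_le fun i _ =>
          le_iSup (fun i => (I i).carrier (obPow g (n + 1)) (obPow h (n + 1))) i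
    have hn' : powHom r (n + 1) ∈
        ⨆ i, (I i).carrier (obPow g (n + 1)) (obPow h (n + 1)) := hn
    rw [heq] at hn'
    exact (AddSubgroup.mem_iSup_of_directed hdir).mp hn'
  obtain ⟨F, hF⟩ := key
  refine ⟨F, ?_⟩
  intro p hp
  rw [Set.mem_iUnion₂]
  by_contra hcon
  push_neg at hcon
  have hlep : ∀ i ∈ F, I i ≤ p.1 := by
    intro i hi
    have hni : p ∉ U i := hcon i hi
    rw [hI i] at hni
    exact Set.notMem_compl_iff.mp hni
  have hpow : powHom r (n + 1) ∈ p.1.carrier (obPow g (n + 1)) (obPow h (n + 1)) := by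
    refine SetLike.le_def.mp ?_ hF
    exact iSup₂_le fun i hi => hlep i hi _ _
  exact hp (mem_of_powHom_mem p.2 hpow)

theorem spec_compactSpace : CompactSpace (Spec C) :=
  ⟨by rw [← spec_basicOpen_id]; exact spec_isCompact_basicOpen _⟩

/-- The prime ideal of functions vanishing on a subset of the spectrum. -/
def zIdeal (Z : Set (Spec C)) : HomIdeal C where
  carrier g h := ⨅ (q : Spec C) (_ : q ∈ Z), q.1.carrier g h
  comp_left := by
    intro g h h' rr s hr
    simp only [AddSubgroup.mem_iInf] at hr ⊢
    exact fun q hq => q.1.comp_left rr s (hr q hq)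
  comp_right := by
    intro g' g h t rr hr
    simp only [AddSubgroup.mem_iInf] at hr ⊢
    exact fun q hq => q.1.comp_right t rr (hr q hq)
  tensor_left := by
    intro g h g' h' s rr hr
    simp only [AddSubgroup.mem_iInf] at hr ⊢
    exact fun q hq => q.1.tensor_left s rr (hr q hq)
  tensor_right := by
    intro g h g' h' rr s hr
    simp only [AddSubgroup.mem_iInf] at hr ⊢
    exact fun q hq => q.1.tensor_right rr s (hr q hq)

theorem mem_zIdeal_iff {Z : Set (Spec C)} {g h : C} {rr : g ⟶ h} :
    rr ∈ (zIdeal Z).carrier g h ↔ ∀ q ∈ Z, rr ∈ q.1.carrier g h := by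
  simp [zIdeal, AddSubgroup.mem_iInf]

theorem spec_generic (Z : Set (Spec C)) (hirr : IsIrreducible Z) (hcl : IsClosed Z) :
    ∃! p : Spec C, closure ({p} : Set (Spec C)) = Z := by
  obtain ⟨I, hI⟩ := (spec_isClosed_iff Z).mp hcl
  have hne : Z.Nonempty := hirr.1
  have hproper : (zIdeal Z).IsProper := by
    intro x hx
    obtain ⟨q, hq⟩ := hne
    rw [mem_zIdeal_iff] at hx
    exact q.2.isProper x (hx q hq)
  have hprime : (zIdeal Z).IsPrime := by
    refine ⟨hproper, ?_⟩
    intro g1 g2 g3 a b hab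
    by_contra hcon
    push_neg at hcon
    obtain ⟨ha, hb⟩ := hcon
    rw [mem_zIdeal_iff] at ha hb hab
    push_neg at ha hb
    obtain ⟨q1, hq1, hq1'⟩ := ha
    obtain ⟨q2, hq2, hq2'⟩ := hb
    obtain ⟨q, hqZ, hqa, hqb⟩ := hirr.2 (basicOpen a) (basicOpen b)
      (spec_isOpen_basicOpen a) (spec_isOpen_basicOpen b) ⟨q1, hq1, hq1'⟩ ⟨q2, hq2, hq2'⟩
    rcases q.2.mem_or_mem a b (hab q hqZ) with hcc | hcc
    · exact hqa hcc
    · exact hqb hcc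
  have hclosure : closure ({(⟨zIdeal Z, hprime⟩ : Spec C)} : Set (Spec C)) = Z := by
    refine (spec_closure_singleton (⟨zIdeal Z, hprime⟩ : Spec C)).trans ?_
    apply subset_antisymm
    · intro q hq
      rw [hI]
      intro g h
      intro rr hrr
      refine SetLike.le_def.mp (hq g h) ?_
      rw [mem_zIdeal_iff]
      intro q' hq'
      rw [hI] at hq'
      exact SetLike.le_def.mp (hq' g h) hrr
    · intro q hq
      intro g h rr hrr
      rw [mem_zIdeal_iff] at hrr
      exact hrr q hq
  refine ⟨⟨zIdeal Z, hprime⟩, hclosure, ?_⟩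
  intro q hq
  have heq : closure ({q} : Set (Spec C))
      = closure ({(⟨zIdeal Z, hprime⟩ : Spec C)} : Set (Spec C)) := hq.trans hclosure.symm
  have ht0 : T0Space (Spec C) := spec_t0
  exact ((t0Space_iff_inseparable (Spec C)).mp ht0) q _ (inseparable_iff_closure_eq.mpr heq)

end Topology

end Aux

/-- **Statement 11.** The spectrum of a graded commutative 2-ring is a spectral space:
it is T₀, quasi-compact, the basic opens `D_r` form a basis of quasi-compact open
subsets closed under finite (pairwise) intersections, and every irreducible closed
subset has a unique generic point. -/
theorem spec_is_spectral
    {C : Type u} [Category.{v} C] [Preadditive C] [MonoidalCategory C]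
    [SymmetricCategory C] [MonoidalPreadditive C] [GradedComm2Ring C] :
    T0Space (Spec C) ∧
    CompactSpace (Spec C) ∧
    TopologicalSpace.IsTopologicalBasis
      {U : Set (Spec C) | ∃ (g h : C) (r : g ⟶ h), U = basicOpen r} ∧
    (∀ {g h : C} (r : g ⟶ h), IsCompact (basicOpen r)) ∧
    (∀ {g h g' h' : C} (r : g ⟶ h) (s : g' ⟶ h'),
      ∃ (a b : C) (t : a ⟶ b), basicOpen r ∩ basicOpen s = basicOpen t) ∧
    (∀ Z : Set (Spec C), IsIrreducible Z → IsClosed Z →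
      ∃! p : Spec C, closure {p} = Z) := by
  refine ⟨spec_t0, spec_compactSpace, spec_basis, ?_, ?_, ?_⟩
  · intro g h r
    exact spec_isCompact_basicOpen r
  · intro g h g' h' r s
    exact ⟨g ⊗ g', h ⊗ h', r ⊗ₘ s, spec_basicOpen_inter r s⟩
  · intro Z hirr hcl
    exact spec_generic Z hirr hcl
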